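/- Let G be a finite group acting transitively on a finite set X, let x ∈ X, and let H be a normal subgroup of the stabilizer G_x; for y ∈ X set H_y := gHg⁻¹ for any g ∈ G with g·x = y. If for every y ∈ X the subgroup H is subnormal in the subgroup of G generated by H ∪ H_y, then H is subnormal in G. -/

import Mathlib

/-- For `y ∈ X`, the set `H_y := gHg⁻¹` for any `g ∈ G` with `g • x = y`
(rendered, choice-freely, as the union of `gHg⁻¹` over all such `g`; when `H` is
normal in the stabilizer of `x` all these conjugates coincide). -/
def conjAt {G X : Type*} [Group G] [MulAction G X] (H : Subgroup G) (x y : X) : Set G :=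
  ⋃ g ∈ {g : G | g • x = y}, (fun h => g * h * g⁻¹) '' (H : Set G)

/-- A subgroup `H` of a group `G` is subnormal in a subgroup `K` (e.g. `K = ⊤`)
if there are `ℓ` and a chain of subgroups `H = F_ℓ ⊆ ⋯ ⊆ F_1 ⊆ F_0 = K` with
`F_i` normal in `F_{i-1}` for all `i = 1, …, ℓ`. -/
def IsSubnormalIn {G : Type*} [Group G] (H K : Subgroup G) : Prop :=
  ∃ (ℓ : ℕ) (F : Fin (ℓ + 1) → Subgroup G),
    F 0 = K ∧ F (Fin.last ℓ) = H ∧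
    ∀ i : Fin ℓ, F i.succ ≤ F i.castSucc ∧
      ∀ g ∈ F i.castSucc, ∀ h ∈ F i.succ, g * h * g⁻¹ ∈ F i.succ

open scoped Pointwise

namespace SNAux

variable {G : Type*} [Group G]

/-- One-step relation: `A` is normal in `B`. -/
def Step (A B : Subgroup G) : Prop :=
  A ≤ B ∧ ∀ g ∈ B, ∀ h ∈ A, g * h * g⁻¹ ∈ A

/-- Subnormality as reflexive-transitive closure of `Step`. -/
def SN (A B : Subgroup G) : Prop := Relation.ReflTransGen Step A B

theorem sn_of_chain {H K : Subgroup G} (h : IsSubnormalIn H K) : SN H K := by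
  obtain ⟨ℓ, F, h0, hl, hstep⟩ := h
  induction ℓ generalizing K with
  | zero =>
    have h00 : (Fin.last 0 : Fin 1) = 0 := rfl
    rw [← h0, ← hl, h00]
    exact Relation.ReflTransGen.refl
  | succ n ih =>
    have tail : SN H (F 1) := by
      refine ih (F ∘ Fin.succ) rfl ?_ ?_
      · simpa [Function.comp, Fin.succ_last] using hl
      · intro i
        have := hstep i.succ
        simpa only [Function.comp_apply, Fin.succ_castSucc] using this
    refine tail.tail ?_
    have h1 := hstep 0
    simp only [Fin.succ_zero_eq_one, Fin.castSucc_zero, h0] at h1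
    exact h1

theorem chain_of_sn {H K : Subgroup G} (h : SN H K) : IsSubnormalIn H K := by
  induction h with
  | refl => exact ⟨0, fun _ => H, rfl, rfl, fun i => i.elim0⟩
  | @tail b c hab hbc ih =>
    obtain ⟨ℓ, F, h0, hl, hstep⟩ := ih
    refine ⟨ℓ + 1, Fin.cases c F, ?_, ?_, ?_⟩
    · rfl
    · show Fin.cases c F (Fin.last (ℓ + 1)) = H
      rw [← Fin.succ_last, Fin.cases_succ]
      exact hl
    · intro i
      induction i using Fin.cases with
      | zero =>
        simp only [Fin.castSucc_zero, Fin.succ_zero_eq_one]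
        have e1 : (Fin.cases c F (1 : Fin (ℓ + 2)) : Subgroup G) = F 0 := rfl
        have e0 : (Fin.cases c F (0 : Fin (ℓ + 2)) : Subgroup G) = c := rfl
        rw [e1, e0, h0]
        exact hbc
      | succ j =>
        have e1 : (Fin.cases c F (j.succ.succ) : Subgroup G) = F j.succ := rfl
        have e2 : (Fin.cases c F (j.succ.castSucc) : Subgroup G) = F j.castSucc := by
          rw [← Fin.succ_castSucc]
          exact Fin.cases_succ _
        beta_reduce
        rw [e1, e2]
        exact hstep j

theorem isSubnormalIn_iff_sn {H K : Subgroup G} : IsSubnormalIn H K ↔ SN H K :=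
  ⟨sn_of_chain, chain_of_sn⟩

end SNAux

open scoped Pointwise

namespace SNAux

variable {G : Type*} [Group G]

theorem SN.le {A B : Subgroup G} (h : SN A B) : A ≤ B := by
  induction h with
  | refl => exact le_rfl
  | tail _ hbc ih => exact ih.trans hbc.1

theorem sn_refl (A : Subgroup G) : SN A A := Relation.ReflTransGen.refl

theorem sn_of_step {A B : Subgroup G} (h : Step A B) : SN A B :=
  Relation.ReflTransGen.single h

theorem SN.trans {A B C : Subgroup G} (h1 : SN A B) (h2 : SN B C) : SN A C :=
  Relation.ReflTransGen.trans h1 h2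

/-- Lift subnormality along a `Step`-preserving map of subgroup lattices. -/
theorem SN.lift {G' : Type*} [Group G'] (f : Subgroup G → Subgroup G')
    (hf : ∀ {A B : Subgroup G}, Step A B → Step (f A) (f B))
    {A B : Subgroup G} (h : SN A B) : SN (f A) (f B) := by
  induction h with
  | refl => exact sn_refl _
  | tail _ hbc ih => exact ih.tail (hf hbc)

theorem mem_sup_normal {A N : Subgroup G} [N.Normal] {x : G} :
    x ∈ A ⊔ N ↔ ∃ a ∈ A, ∃ n ∈ N, x = a * n := by
  constructor
  · intro hx
    have : x ∈ (A : Set G) * (N : Set G) := by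
      rw [← Subgroup.mul_normal A N]; exact hx
    obtain ⟨a, ha, n, hn, h⟩ := this
    exact ⟨a, ha, n, hn, h.symm⟩
  · rintro ⟨a, ha, n, hn, rfl⟩
    exact mul_mem (Subgroup.mem_sup_left ha) (Subgroup.mem_sup_right hn)

theorem SN.inf_right {A B : Subgroup G} (K : Subgroup G) (h : SN A B) :
    SN (A ⊓ K) (B ⊓ K) := by
  refine h.lift (· ⊓ K) ?_
  intro A B hs
  refine ⟨inf_le_inf_right _ hs.1, ?_⟩
  intro g hg h hh
  rw [Subgroup.mem_inf] at hg hh ⊢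
  exact ⟨hs.2 g hg.1 h hh.1, mul_mem (mul_mem hg.2 hh.2) (inv_mem hg.2)⟩
/-- Restriction: if `A` is subnormal in `B` and `A ≤ K ≤ B`, then `A` is subnormal in `K`. -/
theorem SN.restrict {A B K : Subgroup G} (h : SN A B) (hAK : A ≤ K) (hKB : K ≤ B) :
    SN A K := by
  have := h.inf_right K
  rwa [inf_eq_left.2 hAK, inf_eq_right.2 hKB] at this

theorem SN.map {G' : Type*} [Group G'] (f : G →* G') {A B : Subgroup G} (h : SN A B) :
    SN (A.map f) (B.map f) := by
  refine h.lift (Subgroup.map f) ?_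
  intro A B hs
  refine ⟨Subgroup.map_mono hs.1, ?_⟩
  rintro g' hg' h' hh'
  obtain ⟨g, hg, rfl⟩ := hg'
  obtain ⟨a, ha, rfl⟩ := hh'
  exact ⟨g * a * g⁻¹, hs.2 g hg a ha, by simp [mul_assoc]⟩

theorem SN.comap {G' : Type*} [Group G'] (f : G' →* G) {A B : Subgroup G} (h : SN A B) :
    SN (A.comap f) (B.comap f) := by
  refine h.lift (Subgroup.comap f) ?_
  intro A B hs
  refine ⟨Subgroup.comap_mono hs.1, ?_⟩
  intro g hg h hh
  simp only [Subgroup.mem_comap, map_mul, map_inv] at *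
  exact hs.2 _ hg _ hh

/-- Pushing a chain up by joining with a normal subgroup. -/
theorem SN.sup_normal (N : Subgroup G) [hN : N.Normal] {A B : Subgroup G} (h : SN A B) :
    SN (A ⊔ N) (B ⊔ N) := by
  refine h.lift (· ⊔ N) ?_
  intro A B hs
  refine ⟨sup_le_sup_right hs.1 N, ?_⟩
  intro g hg h hh
  show g * h * g⁻¹ ∈ A ⊔ N
  rw [mem_sup_normal] at hh hg
  obtain ⟨a, ha, n, hn, rfl⟩ := hh
  obtain ⟨b, hb, m, hm, rfl⟩ := hg
  have key : ∀ y ∈ A ⊔ N, (b * m) * y * (b * m)⁻¹ ∈ A ⊔ N := by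
    intro y hy
    rw [mem_sup_normal] at hy
    obtain ⟨a', ha', n', hn', rfl⟩ := hy
    have e : (b * m) * (a' * n') * (b * m)⁻¹ =
        (b * a' * b⁻¹) * (b * ((a'⁻¹ * m * a' * m⁻¹) * (m * n' * m⁻¹)) * b⁻¹) := by
      group
    rw [e]
    refine mul_mem (Subgroup.mem_sup_left (hs.2 b hb a' ha')) (Subgroup.mem_sup_right ?_)
    refine hN.conj_mem _ (mul_mem ?_ (hN.conj_mem _ hn' m)) b
    have : a'⁻¹ * m * a' ∈ N := by simpa using hN.conj_mem _ hm a'⁻¹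
    simpa [mul_assoc] using mul_mem this (inv_mem hm)
  exact key _ (mul_mem (Subgroup.mem_sup_left ha) (Subgroup.mem_sup_right hn))

end SNAux

namespace SNAux

variable {G : Type*} [Group G]

/-- Conjugate of a subgroup. -/
def cj (g : G) (H : Subgroup G) : Subgroup G :=
  H.map (MulAut.conj g).toMonoidHom

theorem mem_cj {g x : G} {H : Subgroup G} : x ∈ cj g H ↔ g⁻¹ * x * g ∈ H := by
  constructor
  · rintro ⟨h, hh, rfl⟩
    simpa [mul_assoc] using hh
  · intro hx
    exact ⟨g⁻¹ * x * g, hx, by simp [MulAut.conj]; group⟩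

theorem cj_cj (g g' : G) (H : Subgroup G) : cj g (cj g' H) = cj (g * g') H := by
  ext x
  simp only [mem_cj]
  have e : g'⁻¹ * (g⁻¹ * x * g) * g' = (g * g')⁻¹ * x * (g * g') := by group
  rw [e]

theorem cj_one (H : Subgroup G) : cj 1 H = H := by
  ext x; simp [mem_cj]

theorem cj_le_iff {g : G} {H K : Subgroup G} : cj g H ≤ K ↔ H ≤ cj g⁻¹ K := by
  constructor
  · intro h x hx
    rw [mem_cj]
    apply h
    rw [mem_cj]
    simpa [mul_assoc] using hx
  · intro h x hx
    rw [mem_cj] at hx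
    have := h hx
    rw [mem_cj] at this
    simpa [mul_assoc] using this

theorem cj_mono (g : G) {H K : Subgroup G} (h : H ≤ K) : cj g H ≤ cj g K := by
  intro x hx; rw [mem_cj] at *; exact h hx

theorem cj_smul {g : G} {H : Subgroup G} {h : G} (hh : h ∈ H) : g * h * g⁻¹ ∈ cj g H := by
  rw [mem_cj]; simpa [mul_assoc] using hh

theorem cj_eq_top_iff {g : G} {H : Subgroup G} : cj g H = ⊤ ↔ H = ⊤ := by
  constructor <;> intro h
  · rw [eq_top_iff]; intro x _
    have : g * x * g⁻¹ ∈ cj g H := h ▸ Subgroup.mem_top _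
    rw [mem_cj] at this
    simpa [mul_assoc] using this
  · subst h; rw [eq_top_iff]; intro x _; rw [mem_cj]; trivial

theorem cj_top_eq (g : G) : cj g (⊤ : Subgroup G) = ⊤ := cj_eq_top_iff.2 rfl

theorem SN.cj {A B : Subgroup G} (g : G) (h : SN A B) : SN (cj g A) (cj g B) :=
  h.map _

theorem cj_sup (g : G) (A B : Subgroup G) : cj g (A ⊔ B) = cj g A ⊔ cj g B :=
  Subgroup.map_sup _ _ _

end SNAux

namespace SNAux

variable {G : Type*} [Group G]

section Card
variable [Finite G]

theorem card_lt_card {A B : Subgroup G} (h : A < B) : Nat.card A < Nat.card B := by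
  rw [show Nat.card A = Nat.card (A : Set G) from rfl,
    show Nat.card B = Nat.card (B : Set G) from rfl,
    Nat.card_coe_set_eq, Nat.card_coe_set_eq]
  exact Set.ncard_strictMono (SetLike.coe_ssubset_coe.2 h)

theorem card_le_card {A B : Subgroup G} (h : A ≤ B) : Nat.card A ≤ Nat.card B :=
  Subgroup.card_le_of_le h

theorem card_top_eq : Nat.card (⊤ : Subgroup G) = Nat.card G :=
  Nat.card_congr Subgroup.topEquiv.toEquiv

/-- Any nonempty family of subgroups has a minimal element. -/
theorem exists_minimal {S : Set (Subgroup G)} (hS : S.Nonempty) :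
    ∃ A ∈ S, ∀ B ∈ S, ¬ B < A := by
  obtain ⟨A, hA⟩ := Set.Finite.exists_minimal (Set.toFinite S) hS
  exact ⟨A, hA.prop, fun B hB hBA => hA.not_lt hB hBA⟩

theorem exists_maximal {S : Set (Subgroup G)} (hS : S.Nonempty) :
    ∃ A ∈ S, ∀ B ∈ S, ¬ A < B := by
  obtain ⟨A, hA⟩ := Set.Finite.exists_maximal (Set.toFinite S) hS
  exact ⟨A, hA.prop, fun B hB hAB => hA.not_gt hB hAB⟩

/-- Every proper subgroup lies below a coatom (maximal proper subgroup). -/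
theorem exists_coatom_above {K : Subgroup G} (hK : K ≠ ⊤) :
    ∃ M, K ≤ M ∧ M ≠ ⊤ ∧ ∀ T, M < T → T = ⊤ := by
  obtain ⟨M, ⟨hKM, hMne⟩, hmax⟩ :=
    exists_maximal (S := {T | K ≤ T ∧ T ≠ ⊤}) ⟨K, le_rfl, hK⟩
  refine ⟨M, hKM, hMne, fun T hMT => ?_⟩
  by_contra hT
  exact hmax T ⟨hKM.trans hMT.le, hT⟩ hMT

end Card

end SNAux

namespace SNAux

variable {G : Type*} [Group G]

/-- Normal closure of (the underlying set of) `H` inside `T`. -/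
def ncl (T H : Subgroup G) : Subgroup G :=
  Subgroup.closure (⋃ t ∈ (T : Set G), (fun h => t * h * t⁻¹) '' (H : Set G))

theorem le_ncl {T H : Subgroup G} : H ≤ ncl T H := by
  intro h hh
  apply Subgroup.subset_closure
  refine Set.mem_biUnion (one_mem T) ?_
  exact ⟨h, hh, by simp⟩

theorem ncl_le {T H K : Subgroup G} (hK : ∀ t ∈ T, ∀ h ∈ H, t * h * t⁻¹ ∈ K) :
    ncl T H ≤ K := by
  refine Subgroup.closure_le K |>.2 ?_
  rintro x hx
  simp only [Set.mem_iUnion, Set.mem_image, SetLike.mem_coe] at hx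
  obtain ⟨t, ht, h, hh, rfl⟩ := hx
  exact hK t ht h hh

theorem ncl_le_self {T H : Subgroup G} (h : H ≤ T) : ncl T H ≤ T :=
  ncl_le fun t ht x hx => mul_mem (mul_mem ht (h hx)) (inv_mem ht)

theorem conj_mem_ncl {T H : Subgroup G} {t h : G} (ht : t ∈ T) (hh : h ∈ H) :
    t * h * t⁻¹ ∈ ncl T H := by
  apply Subgroup.subset_closure
  exact Set.mem_biUnion ht ⟨h, hh, rfl⟩

theorem cj_le_ncl {T H : Subgroup G} {t : G} (ht : t ∈ T) : cj t H ≤ ncl T H := by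
  intro x hx
  rw [mem_cj] at hx
  have := conj_mem_ncl ht hx
  simpa [mul_assoc] using this

/-- `T` normalizes `ncl T H`. -/
theorem ncl_conj {T H : Subgroup G} {t x : G} (ht : t ∈ T) (hx : x ∈ ncl T H) :
    t * x * t⁻¹ ∈ ncl T H := by
  revert x
  have key : ∀ x ∈ (⋃ s ∈ (T : Set G), (fun h => s * h * s⁻¹) '' (H : Set G)),
      t * x * t⁻¹ ∈ ncl T H := by
    intro x hx
    simp only [Set.mem_iUnion, Set.mem_image, SetLike.mem_coe] at hx
    obtain ⟨s, hs, h, hh, rfl⟩ := hx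
    have : (t * s) * h * (t * s)⁻¹ ∈ ncl T H := conj_mem_ncl (mul_mem ht hs) hh
    simpa [mul_assoc] using this
  intro x hx
  induction hx using Subgroup.closure_induction with
  | mem y hy => exact key y hy
  | one => simpa using one_mem (ncl T H)
  | mul y z _ _ hy hz =>
    have : (t * y * t⁻¹) * (t * z * t⁻¹) ∈ ncl T H := mul_mem hy hz
    simpa [mul_assoc] using this
  | inv y _ hy =>
    have : (t * y * t⁻¹)⁻¹ ∈ ncl T H := inv_mem hy
    simpa [mul_assoc] using this

theorem step_ncl {T H : Subgroup G} (h : H ≤ T) : Step (ncl T H) T :=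
  ⟨ncl_le_self h, fun g hg x hx => ncl_conj hg hx⟩

/-- Iterated normal closure series of `H` starting from `K`. -/
def series (K H : Subgroup G) : ℕ → Subgroup G
  | 0 => K
  | n + 1 => ncl (series K H n) H

theorem le_series {K H : Subgroup G} (h : H ≤ K) : ∀ n, H ≤ series K H n
  | 0 => h
  | n + 1 => le_ncl

theorem series_le {K H : Subgroup G} (h : H ≤ K) : ∀ n, series K H n ≤ K
  | 0 => le_rfl
  | n + 1 => (ncl_le_self (le_series h n)).trans (series_le h n)

theorem sn_series {K H : Subgroup G} (h : H ≤ K) : ∀ n, SN (series K H n) K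
  | 0 => sn_refl K
  | n + 1 => Relation.ReflTransGen.head (step_ncl (le_series h n)) (sn_series h n)

/-- The fastest descending series reaches `H` whenever `H` is subnormal in `K`. -/
theorem series_reaches {K H : Subgroup G} (h : SN H K) : ∃ n, series K H n = H := by
  have hHK : H ≤ K := h.le
  obtain ⟨ℓ, F, h0, hl, hstep⟩ := chain_of_sn h
  have key : ∀ i : Fin (ℓ + 1), series K H i.val ≤ F i := by
    intro i
    induction i using Fin.induction with
    | zero => rw [h0]; exact le_rfl
    | succ j ihj =>
      show ncl (series K H j.val) H ≤ F j.succ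
      have hH : H ≤ F j.succ := by
        have : ∀ i : Fin (ℓ + 1), H ≤ F i := by
          intro i
          induction i using Fin.reverseInduction with
          | last => rw [hl]
          | cast j ihj => exact ihj.trans (hstep j).1
        exact this j.succ
      refine ncl_le fun t ht x hx => ?_
      exact (hstep j).2 t (ihj ht) x (hH hx)
  refine ⟨ℓ, le_antisymm ?_ (le_series hHK _)⟩
  have := key (Fin.last ℓ)
  rw [hl] at this
  simpa using this

end SNAux

namespace SNAux

variable {G : Type*} [Group G]

theorem sn_decomp {H T : Subgroup G} (h : SN H T) :
    H = T ∨ ∃ A, A ≠ T ∧ SN H A ∧ Step A T := by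
  induction h with
  | refl => exact Or.inl rfl
  | @tail b c hab hbc ih =>
    by_cases hbceq : b = c
    · subst hbceq; exact ih
    · exact Or.inr ⟨b, hbceq, hab, hbc⟩

/-- `N` is a minimal nontrivial normal subgroup of `T`. -/
def MinNormalIn (T N : Subgroup G) : Prop :=
  Step N T ∧ N ≠ ⊥ ∧ ∀ N', Step N' T → N' ≤ N → N' ≠ ⊥ → N' = N

theorem cj_step_of_mem {A T N' : Subgroup G} (hA : Step A T) (hN : Step N' A)
    {t : G} (ht : t ∈ T) : Step (cj t N') A := by
  constructor
  · intro x hx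
    rw [mem_cj] at hx
    have : t * (t⁻¹ * x * t) * t⁻¹ ∈ A := hA.2 t ht _ (hN.1 hx)
    simpa [mul_assoc] using this
  · intro a ha x hx
    rw [mem_cj] at hx ⊢
    have h1 : t⁻¹ * a * t ∈ A := by simpa using hA.2 t⁻¹ (inv_mem ht) a ha
    have h2 : (t⁻¹ * a * t) * (t⁻¹ * x * t) * (t⁻¹ * a * t)⁻¹ ∈ N' := hN.2 _ h1 _ hx
    have e : t⁻¹ * (a * x * a⁻¹) * t = (t⁻¹ * a * t) * (t⁻¹ * x * t) * (t⁻¹ * a * t)⁻¹ := by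
      group
    rw [e]; exact h2

theorem cj_eq_bot_iff {t : G} {N : Subgroup G} : cj t N = ⊥ ↔ N = ⊥ := by
  constructor <;> intro h
  · rw [eq_bot_iff]; intro x hx
    have : t * x * t⁻¹ ∈ cj t N := cj_smul hx
    rw [h, Subgroup.mem_bot] at this
    have : x = 1 := by
      have := congrArg (fun y => t⁻¹ * y * t) this
      simpa [mul_assoc] using this
    simp [this]
  · subst h; rw [eq_bot_iff]; intro x hx
    rw [mem_cj, Subgroup.mem_bot] at hx
    have h2 : t * (t⁻¹ * x * t) * t⁻¹ = t * 1 * t⁻¹ := by rw [hx]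
    have e : t * (t⁻¹ * x * t) * t⁻¹ = x := by group
    rw [e] at h2
    rw [Subgroup.mem_bot]
    simpa using h2

theorem keyRel [Finite G] :
    ∀ (k : ℕ) (T H N : Subgroup G), Nat.card T ≤ k → SN H T → MinNormalIn T N →
      ∀ n ∈ N, ∀ h ∈ H, n * h * n⁻¹ ∈ H := by
  intro k
  induction k with
  | zero =>
    intro T H N hcard
    have : 0 < Nat.card T := Nat.card_pos
    omega
  | succ k ih =>
    intro T H N hcard hsn hmin n hn h hh
    obtain ⟨hNT, hNbot, hNmin⟩ := hmin
    rcases sn_decomp hsn with rfl | ⟨A, hAne, hsnA, hAT⟩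
    · exact mul_mem (mul_mem (hNT.1 hn) hh) (inv_mem (hNT.1 hn))
    have hHA : H ≤ A := hsnA.le
    have hAltT : A < T := lt_of_le_of_ne hAT.1 hAne
    -- the intersection N ⊓ A is normal in T
    have hstepNA : Step (N ⊓ A) T := by
      refine ⟨inf_le_left.trans hNT.1, ?_⟩
      intro t ht x hx
      rw [Subgroup.mem_inf] at hx ⊢
      exact ⟨hNT.2 t ht x hx.1, hAT.2 t ht x hx.2⟩
    by_cases hNA : N ⊓ A = ⊥
    · -- N centralizes A, hence H
      have hcomm : n * h * n⁻¹ * h⁻¹ = 1 := by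
        have hc1 : n * h * n⁻¹ * h⁻¹ ∈ A := by
          have h1 : n * h * n⁻¹ ∈ A := hAT.2 n (hNT.1 hn) h (hHA hh)
          exact mul_mem h1 (inv_mem (hHA hh))
        have hc2 : n * h * n⁻¹ * h⁻¹ ∈ N := by
          have h1 : h * n⁻¹ * h⁻¹ ∈ N := hNT.2 h (hAT.1 (hHA hh)) n⁻¹ (inv_mem hn)
          have := mul_mem hn h1
          simpa [mul_assoc] using this
        have : n * h * n⁻¹ * h⁻¹ ∈ N ⊓ A := Subgroup.mem_inf.2 ⟨hc2, hc1⟩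
        rw [hNA, Subgroup.mem_bot] at this
        exact this
      have : n * h * n⁻¹ = h := by
        have := congrArg (fun y => y * h) hcomm
        simpa [mul_assoc] using this
      rw [this]; exact hh
    · -- N ≤ A
      have hNA' : N ⊓ A = N := hNmin _ hstepNA inf_le_left hNA
      have hNleA : N ≤ A := by rw [← hNA']; exact inf_le_right
      -- pick a minimal normal subgroup of A below N
      have hSne : ({N' | Step N' A ∧ N' ≤ N ∧ N' ≠ ⊥} : Set (Subgroup G)).Nonempty := by
        refine ⟨N, ⟨hNleA, ?_⟩, le_rfl, hNbot⟩
        intro a ha x hx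
        exact hNT.2 a (hAT.1 ha) x hx
      obtain ⟨N₀, ⟨hN₀A, hN₀N, hN₀bot⟩, hN₀min⟩ := exists_minimal hSne
      have hminN₀ : MinNormalIn A N₀ := by
        refine ⟨hN₀A, hN₀bot, ?_⟩
        intro N'' h1 h2 h3
        by_contra hne
        exact hN₀min N'' ⟨h1, h2.trans hN₀N, h3⟩ (lt_of_le_of_ne h2 hne)
      -- the join of all minimal normal subgroups of A below N
      set SS : Set (Subgroup G) := {N' | MinNormalIn A N' ∧ N' ≤ N} with hSS
      set U : Subgroup G := sSup SS with hU
      have hUnormalizer : U ≤ Subgroup.normalizer (H : Set G) := by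
        refine sSup_le ?_
        rintro N' ⟨hN'min, hN'N⟩
        have hrec : ∀ m ∈ N', ∀ x ∈ H, m * x * m⁻¹ ∈ H := by
          refine ih A H N' ?_ hsnA hN'min
          have := card_lt_card hAltT
          omega
        intro m hm
        rw [Subgroup.mem_normalizer_iff]
        intro x
        constructor
        · intro hx; exact hrec m hm x hx
        · intro hx
          have := hrec m⁻¹ (inv_mem hm) _ hx
          simpa [mul_assoc] using this
      -- SS is invariant under conjugation by T
      have hSSconj : ∀ t ∈ T, ∀ N' ∈ SS, cj t N' ∈ SS := by
        rintro t ht N' ⟨⟨hN'A, hN'bot, hN'min⟩, hN'N⟩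
        refine ⟨⟨cj_step_of_mem hAT hN'A ht, ?_, ?_⟩, ?_⟩
        · intro hc; exact hN'bot (cj_eq_bot_iff.1 hc)
        · intro N'' h1 h2 h3
          have h2' : cj t⁻¹ N'' ≤ N' := by
            have := cj_mono t⁻¹ h2
            rwa [cj_cj, inv_mul_cancel, cj_one] at this
          have h1' : Step (cj t⁻¹ N'') A := cj_step_of_mem hAT h1 (inv_mem ht)
          have h3' : cj t⁻¹ N'' ≠ ⊥ := fun hc => h3 (cj_eq_bot_iff.1 hc)
          have := hN'min _ h1' h2' h3'
          have := congrArg (cj t) this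
          rwa [cj_cj, mul_inv_cancel, cj_one] at this
        · intro x hx
          rw [mem_cj] at hx
          have h1 : t⁻¹ * x * t ∈ N := hN'N hx
          have h2 : t * (t⁻¹ * x * t) * t⁻¹ ∈ N := hNT.2 t ht _ h1
          simpa [mul_assoc] using h2
      -- U is normal in T
      have hUT : Step U T := by
        have hUleT : U ≤ T := by
          refine sSup_le ?_
          rintro N' ⟨hN'min, _⟩
          exact hN'min.1.1.trans hAT.1
        refine ⟨hUleT, ?_⟩
        intro t ht x hx
        have hcjle : cj t U ≤ U := by
          rw [hU]
          rw [show cj t (sSup SS) = ⨆ N' ∈ SS, cj t N' from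
            (Subgroup.gc_map_comap (MulAut.conj t).toMonoidHom).l_sSup]
          refine iSup_le fun N' => iSup_le fun hN' => le_sSup (hSSconj t ht N' hN')
        exact hcjle (cj_smul hx)
      -- minimality of N forces U = N
      have hUN : U = N := by
        refine hNmin U hUT (sSup_le ?_) ?_
        · rintro N' ⟨_, hN'N⟩; exact hN'N
        · intro hUbot
          refine hN₀bot ?_
          rw [eq_bot_iff, ← hUbot]
          exact le_sSup ⟨hminN₀, hN₀N⟩
      have : n ∈ Subgroup.normalizer (H : Set G) := hUnormalizer (hUN ▸ hn)
      rw [Subgroup.mem_normalizer_iff] at this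
      exact (this h).1 hh

end SNAux

namespace SNAux

universe u

variable {G : Type*} [Group G]

theorem cj_eq_self {n : G} {A : Subgroup G} (h1 : ∀ a ∈ A, n * a * n⁻¹ ∈ A)
    (h2 : ∀ a ∈ A, n⁻¹ * a * n ∈ A) : cj n A = A := by
  apply le_antisymm
  · intro x hx
    rw [mem_cj] at hx
    have := h1 _ hx
    simpa [mul_assoc] using this
  · intro a ha
    rw [mem_cj]
    exact h2 a ha

/-- Wielandt's join theorem (absolute form), by induction on the order of the group. -/
theorem joinAbs :
    ∀ (k : ℕ) {G : Type u} [Group G] [Finite G] (A B : Subgroup G), Nat.card G ≤ k →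
      SN A ⊤ → SN B ⊤ → SN (A ⊔ B) ⊤ := by
  intro k
  induction k with
  | zero =>
    intro G _ _ A B hcard _ _
    have : 0 < Nat.card G := Nat.card_pos
    omega
  | succ k ih =>
    intro G _ _ A B hcard hA hB
    by_cases hAB : A ⊔ B = ⊤
    · rw [hAB]; exact sn_refl ⊤
    by_cases htriv : (⊤ : Subgroup G) = ⊥
    · exfalso
      exact hAB (le_antisymm le_top (htriv ▸ bot_le))
    -- choose a minimal normal subgroup N of G
    obtain ⟨N, ⟨hNstep, hNbot⟩, hNmin⟩ :=
      exists_minimal (S := {N : Subgroup G | Step N ⊤ ∧ N ≠ ⊥})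
        ⟨⊤, ⟨le_rfl, fun _ _ x hx => mul_mem (mul_mem trivial hx) trivial⟩, htriv⟩
    have hminN : MinNormalIn ⊤ N := by
      refine ⟨hNstep, hNbot, ?_⟩
      intro N' h1 h2 h3
      by_contra hne
      exact hNmin N' ⟨h1, h3⟩ (lt_of_le_of_ne h2 hne)
    -- N normalizes A and B elementwise
    have hNA : ∀ n ∈ N, ∀ a ∈ A, n * a * n⁻¹ ∈ A :=
      keyRel (Nat.card (⊤ : Subgroup G)) ⊤ A N le_rfl hA hminN
    have hNB : ∀ n ∈ N, ∀ b ∈ B, n * b * n⁻¹ ∈ B :=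
      keyRel (Nat.card (⊤ : Subgroup G)) ⊤ B N le_rfl hB hminN
    have hNnormal : N.Normal := by
      constructor
      intro x hx g
      exact hNstep.2 g trivial x hx
    -- pass to the quotient G ⧸ N
    set f := QuotientGroup.mk' N with hf
    have hsurj : Function.Surjective f := QuotientGroup.mk'_surjective N
    have hcardQ : Nat.card (G ⧸ N) ≤ k := by
      have h1 := Subgroup.card_eq_card_quotient_mul_card_subgroup N
      have h2 : 1 < Nat.card N := (Subgroup.one_lt_card_iff_ne_bot N).2 hNbot
      have h3 : 0 < Nat.card (G ⧸ N) := Nat.card_pos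
      nlinarith
    have hmapA : SN (A.map f) ⊤ := by
      have := hA.map f
      rwa [Subgroup.map_top_of_surjective f hsurj] at this
    have hmapB : SN (B.map f) ⊤ := by
      have := hB.map f
      rwa [Subgroup.map_top_of_surjective f hsurj] at this
    have hQ : SN ((A ⊔ B).map f) ⊤ := by
      rw [Subgroup.map_sup]
      exact ih _ _ hcardQ hmapA hmapB
    have hpull : SN ((A ⊔ B) ⊔ N) ⊤ := by
      have := hQ.comap f
      rwa [Subgroup.comap_top, Subgroup.comap_map_eq, QuotientGroup.ker_mk'] at this
    -- A ⊔ B is normal in (A ⊔ B) ⊔ N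
    have hstep : Step (A ⊔ B) ((A ⊔ B) ⊔ N) := by
      refine ⟨le_sup_left, ?_⟩
      intro g hg x hx
      rw [mem_sup_normal] at hg
      obtain ⟨j, hj, n, hn, rfl⟩ := hg
      have hcjA : cj n A = A :=
        cj_eq_self (hNA n hn) (by simpa using hNA n⁻¹ (inv_mem hn))
      have hcjB : cj n B = B :=
        cj_eq_self (hNB n hn) (by simpa using hNB n⁻¹ (inv_mem hn))
      have hnx : n * x * n⁻¹ ∈ A ⊔ B := by
        have : n * x * n⁻¹ ∈ cj n (A ⊔ B) := cj_smul hx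
        rwa [cj_sup, hcjA, hcjB] at this
      have : j * (n * x * n⁻¹) * j⁻¹ ∈ A ⊔ B :=
        mul_mem (mul_mem hj hnx) (inv_mem hj)
      simpa [mul_assoc] using this
    exact (sn_of_step hstep).trans hpull

end SNAux

namespace SNAux

variable {G : Type*} [Group G]

theorem map_subtype_top (T : Subgroup G) : Subgroup.map T.subtype ⊤ = T := by
  ext x
  simp [Subgroup.mem_map]

/-- Wielandt's join theorem, relative form. -/
theorem joinRel [Finite G] {A B T : Subgroup G} (hA : SN A T) (hB : SN B T) :
    SN (A ⊔ B) T := by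
  have hAT : A ≤ T := hA.le
  have hBT : B ≤ T := hB.le
  have hA' : SN (A.subgroupOf T) ⊤ := by
    have := hA.comap T.subtype
    rwa [show T.comap T.subtype = ⊤ from Subgroup.subgroupOf_self T] at this
  have hB' : SN (B.subgroupOf T) ⊤ := by
    have := hB.comap T.subtype
    rwa [show T.comap T.subtype = ⊤ from Subgroup.subgroupOf_self T] at this
  have hjoin := joinAbs (Nat.card T) (A.subgroupOf T) (B.subgroupOf T) le_rfl hA' hB'
  have := hjoin.map T.subtype
  rwa [map_subtype_top, Subgroup.map_sup, Subgroup.subgroupOf_map_subtype,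
    Subgroup.subgroupOf_map_subtype, inf_eq_left.2 hAT, inf_eq_left.2 hBT] at this

end SNAux

namespace SNAux

variable {G : Type*} [Group G]

/-- A coatom of the subgroup lattice: a maximal proper subgroup. -/
def IsMax (M : Subgroup G) : Prop := M ≠ ⊤ ∧ ∀ T, M < T → T = ⊤

theorem IsMax.eq_of_le {M K : Subgroup G} (hM : IsMax M) (hK : IsMax K) (h : K ≤ M) :
    K = M := by
  rcases lt_or_eq_of_le h with h' | h'
  · exact absurd (hK.2 M h') hM.1
  · exact h'

theorem sn_top_of_normal {H : Subgroup G} (h : H.Normal) : SN H ⊤ :=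
  sn_of_step ⟨le_top, fun g _ x hx => h.conj_mem x hx g⟩

/-- Wielandt's zipper lemma: if `H` is subnormal in every proper subgroup containing
it but not subnormal in the whole group, then `H` lies in a unique maximal subgroup. -/
theorem zipper [Finite G] :
    ∀ (k : ℕ) (H : Subgroup G), Nat.card G - Nat.card H ≤ k →
      (∀ K : Subgroup G, K ≠ ⊤ → H ≤ K → SN H K) → ¬ SN H ⊤ →
      ∀ M₁ M₂ : Subgroup G, IsMax M₁ → IsMax M₂ → H ≤ M₁ → H ≤ M₂ → M₁ = M₂ := by
  intro k
  induction k with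
  | zero =>
    intro H hcard _ hns _ _ _ _ _ _
    exfalso
    have : H = ⊤ := by
      by_contra hne
      have h1 := card_lt_card (lt_of_le_of_ne le_top hne)
      rw [card_top_eq] at h1
      omega
    exact hns (by rw [this]; exact sn_refl ⊤)
  | succ k ih =>
    intro H hcard hZ1 hns M₁ M₂ hM₁ hM₂ hHM₁ hHM₂
    classical
    -- H is not normal
    have hnotnorm : ¬ H.Normal := fun h => hns (sn_top_of_normal h)
    have hNne : Subgroup.normalizer (H : Set G) ≠ ⊤ := fun h => hnotnorm (Subgroup.normalizer_eq_top_iff.1 h)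
    obtain ⟨M, hNM, hMne, hMmax⟩ := exists_coatom_above hNne
    have hMisMax : IsMax M := ⟨hMne, hMmax⟩
    -- main claim: every maximal subgroup containing H equals M
    have main : ∀ K : Subgroup G, IsMax K → H ≤ K → K = M := by
      intro K hKisMax hHK
      by_cases hKM : K ≤ M
      · exact hMisMax.eq_of_le hKisMax hKM
      exfalso
      have hKne : K ≠ ⊤ := hKisMax.1
      have hsnHK : SN H K := hZ1 K hKne hHK
      obtain ⟨r, hr⟩ := series_reaches hsnHK
      have hex : ∃ n, series K H n ≤ M := ⟨r, by rw [hr]; exact Subgroup.le_normalizer.trans hNM⟩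
      set j := Nat.find hex with hj
      have hjle : series K H j ≤ M := Nat.find_spec hex
      have hjne : j ≠ 0 := by
        intro h0
        rw [h0] at hjle
        exact hKM hjle
      obtain ⟨i, hi⟩ : ∃ i, j = i + 1 := ⟨j - 1, by omega⟩
      have hinotle : ¬ series K H i ≤ M := Nat.find_min hex (by omega)
      set D := series K H (i + 1) with hD
      have hDdef : D = ncl (series K H i) H := rfl
      have hHD : H ≤ D := le_series hHK (i + 1)
      have hDK : D ≤ K := series_le hHK (i + 1)
      have hDleM : D ≤ M := by rw [hD]; rwa [hi] at hjle
      -- D ≠ H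
      have hDneH : D ≠ H := by
        intro heq
        refine hinotle (le_trans ?_ hNM)
        intro t ht
        rw [Subgroup.mem_normalizer_iff]
        intro x
        constructor
        · intro hx
          have : t * x * t⁻¹ ∈ D := conj_mem_ncl ht hx
          rw [heq] at this; exact this
        · intro hx
          have : t⁻¹ * (t * x * t⁻¹) * t⁻¹⁻¹ ∈ D := conj_mem_ncl (inv_mem ht) (heq ▸ hx)
          rw [heq] at this
          have e : t⁻¹ * (t * x * t⁻¹) * t⁻¹⁻¹ = x := by group
          rwa [e] at this
      -- D is subnormal in every proper subgroup containing it
      have hZ1D : ∀ L : Subgroup G, L ≠ ⊤ → D ≤ L → SN D L := by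
        intro L hLne hDL
        obtain ⟨E, ⟨hED, hsnEL⟩, hEmax⟩ :=
          exists_maximal (S := {E : Subgroup G | E ≤ D ∧ SN E L})
            ⟨H, hHD, hZ1 L hLne (hHD.trans hDL)⟩
        have hgen : ∀ t ∈ series K H i, cj t H ≤ E := by
          intro t ht
          have hcjD : cj t H ≤ D := hDdef ▸ cj_le_ncl ht
          have hsncj : SN (cj t H) L := by
            have h1 : H ≤ cj t⁻¹ L := by
              rw [← cj_le_iff]
              exact hcjD.trans hDL
            have h2 : cj t⁻¹ L ≠ ⊤ := by
              intro hc
              exact hLne (cj_eq_top_iff.1 hc)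
            have := (hZ1 _ h2 h1).cj t
            rwa [cj_cj, mul_inv_cancel, cj_one] at this
          have hE' : E ⊔ cj t H ∈ {E : Subgroup G | E ≤ D ∧ SN E L} :=
            ⟨sup_le hED hcjD, joinRel hsnEL hsncj⟩
          have : ¬ E < E ⊔ cj t H := hEmax _ hE'
          have heq : E ⊔ cj t H = E := by
            by_contra hne
            exact this (lt_of_le_of_ne le_sup_left (Ne.symm hne))
          rw [← heq]
          exact le_sup_right
        have hDE : D ≤ E := by
          rw [hDdef]
          refine ncl_le fun t ht x hx => ?_
          exact hgen t ht (cj_smul hx)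
        have : E = D := le_antisymm hED hDE
        exact this ▸ hsnEL
      -- D is not subnormal in G
      have hZ2D : ¬ SN D ⊤ := by
        intro hc
        exact hns ((hsnHK.restrict hHD hDK).trans hc)
      -- measure decreases
      have hcardD : Nat.card G - Nat.card D ≤ k := by
        have h1 : Nat.card H < Nat.card D :=
          card_lt_card (lt_of_le_of_ne hHD (Ne.symm hDneH))
        have h2 : Nat.card D ≤ Nat.card G := by
          have := card_le_card (le_top : D ≤ ⊤)
          rwa [card_top_eq] at this
        omega
      -- D is not normal, so its normalizer is proper
      have hDnotnorm : Subgroup.normalizer (D : Set G) ≠ ⊤ := by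
        intro hc
        exact hZ2D (sn_top_of_normal (Subgroup.normalizer_eq_top_iff.1 hc))
      obtain ⟨M₃, hNDM₃, hM₃ne, hM₃max⟩ := exists_coatom_above hDnotnorm
      -- series K H i normalizes D
      have hserN : series K H i ≤ Subgroup.normalizer (D : Set G) := by
        intro t ht
        rw [Subgroup.mem_normalizer_iff]
        intro x
        constructor
        · intro hx
          exact hDdef ▸ ncl_conj ht (hDdef ▸ hx)
        · intro hx
          have : t⁻¹ * (t * x * t⁻¹) * t⁻¹⁻¹ ∈ ncl (series K H i) H :=
            ncl_conj (inv_mem ht) (hDdef ▸ hx)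
          have e : t⁻¹ * (t * x * t⁻¹) * t⁻¹⁻¹ = x := by group
          rw [e] at this
          exact hDdef ▸ this
      -- apply the inductive hypothesis to D
      have hMeq : M = M₃ :=
        ih D hcardD hZ1D hZ2D M M₃ hMisMax ⟨hM₃ne, hM₃max⟩ hDleM
          (Subgroup.le_normalizer.trans hNDM₃)
      exact hinotle (hserN.trans (hMeq ▸ hNDM₃))
    rw [main M₁ hM₁ hHM₁, main M₂ hM₂ hHM₂]
end SNAux

namespace SNAux

universe u

variable {G : Type*} [Group G]

theorem comap_subtype_sup_of_le {K A B : Subgroup G} (hA : A ≤ K) (hB : B ≤ K) :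
    (A ⊔ B).comap K.subtype = A.comap K.subtype ⊔ B.comap K.subtype := by
  apply Subgroup.map_injective (Subgroup.subtype_injective K)
  rw [Subgroup.map_sup, Subgroup.map_comap_eq, Subgroup.map_comap_eq, Subgroup.map_comap_eq,
    Subgroup.range_subtype, inf_eq_right.2 (sup_le hA hB), inf_eq_right.2 hA, inf_eq_right.2 hB]

theorem map_subtype_cj {K : Subgroup G} (kk : K) (A : Subgroup K) :
    Subgroup.map K.subtype (cj kk A) = cj (kk : G) (Subgroup.map K.subtype A) := by
  ext x
  simp only [Subgroup.mem_map, mem_cj, Subgroup.coe_subtype]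
  constructor
  · rintro ⟨a, ha, rfl⟩
    refine ⟨kk⁻¹ * a * kk, ha, ?_⟩
    push_cast
    group
  · rintro ⟨b, hb, hbeq⟩
    refine ⟨kk * b * kk⁻¹, ?_, ?_⟩
    · have e : kk⁻¹ * (kk * b * kk⁻¹) * kk = b := by group
      rw [e]; exact hb
    · push_cast
      rw [hbeq]
      group

theorem cj_le_of_le {K H : Subgroup G} (hH : H ≤ K) {g : G} (hg : g ∈ K) : cj g H ≤ K := by
  intro x hx
  rw [mem_cj] at hx
  have : g * (g⁻¹ * x * g) * g⁻¹ ∈ K := mul_mem (mul_mem hg (hH hx)) (inv_mem hg)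
  simpa [mul_assoc] using this

theorem comap_subtype_cj {K H : Subgroup G} (hH : H ≤ K) (kk : K) :
    cj kk (H.comap K.subtype) = (cj (kk : G) H).comap K.subtype := by
  apply Subgroup.map_injective (Subgroup.subtype_injective K)
  rw [map_subtype_cj, Subgroup.map_comap_eq, Subgroup.map_comap_eq, Subgroup.range_subtype,
    inf_eq_right.2 hH, inf_eq_right.2 (cj_le_of_le hH kk.2)]

/-- Wielandt's subnormality criterion. -/
theorem crit :
    ∀ (k : ℕ) {G : Type u} [Group G] [Finite G] (H : Subgroup G), Nat.card G ≤ k →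
      (∀ g : G, SN H (H ⊔ cj g H)) → SN H ⊤ := by
  intro k
  induction k with
  | zero =>
    intro G _ _ H hcard _
    have : 0 < Nat.card G := Nat.card_pos
    omega
  | succ k ih =>
    intro G _ _ H hcard hw
    by_cases hHtop : H = ⊤
    · rw [hHtop]; exact sn_refl ⊤
    -- H is subnormal in every proper subgroup containing it
    have hZ1 : ∀ K : Subgroup G, K ≠ ⊤ → H ≤ K → SN H K := by
      intro K hKne hHK
      have hw' : ∀ kk : K, SN (H.comap K.subtype) (H.comap K.subtype ⊔ cj kk (H.comap K.subtype)) := by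
        intro kk
        have h1 := (hw (kk : G)).comap K.subtype
        rwa [comap_subtype_sup_of_le hHK (cj_le_of_le hHK kk.2), ← comap_subtype_cj hHK] at h1
      have hcardK : Nat.card K ≤ k := by
        have := card_lt_card (lt_of_le_of_ne (le_top : K ≤ ⊤) hKne)
        rw [card_top_eq] at this
        omega
      have := (ih (H.comap K.subtype) hcardK hw').map K.subtype
      rwa [map_subtype_top, Subgroup.map_comap_eq, Subgroup.range_subtype,
        inf_eq_right.2 hHK] at this
    -- normal closure of H
    set E := Subgroup.normalClosure (H : Set G) with hE
    have hHE : H ≤ E := fun x hx => Subgroup.subset_normalClosure hx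
    by_cases hEtop : E = ⊤
    · -- normal closure is everything
      by_cases hex : ∃ g : G, H ⊔ cj g H = ⊤
      · obtain ⟨g, hg⟩ := hex
        have := hw g
        rwa [hg] at this
      push_neg at hex
      by_contra hns
      obtain ⟨M₀, hHM₀, hM₀ne, hM₀max⟩ := exists_coatom_above hHtop
      have huniq := zipper (Nat.card G - Nat.card H) H le_rfl hZ1 hns
      have hallg : ∀ g : G, cj g H ≤ M₀ := by
        intro g
        obtain ⟨Mg, hJMg, hMgne, hMgmax⟩ := exists_coatom_above (hex g)
        have : Mg = M₀ :=
          huniq Mg M₀ ⟨hMgne, hMgmax⟩ ⟨hM₀ne, hM₀max⟩ (le_sup_left.trans hJMg) hHM₀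
        exact this ▸ (le_sup_right.trans hJMg)
      have hEM₀ : E ≤ M₀ := by
        rw [hE, Subgroup.normalClosure]
        refine (Subgroup.closure_le M₀).2 ?_
        intro x hx
        rw [Group.mem_conjugatesOfSet_iff] at hx
        obtain ⟨a, ha, hconj⟩ := hx
        obtain ⟨c, rfl⟩ := isConj_iff.1 hconj
        exact hallg c (cj_smul ha)
      rw [hEtop] at hEM₀
      exact hM₀ne (top_le_iff.1 hEM₀)
    · -- normal closure is proper: recurse inside it
      have hsnHE : SN H E := hZ1 E hEtop hHE
      have hstepE : Step E ⊤ := by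
        refine ⟨le_top, fun g _ x hx => ?_⟩
        exact Subgroup.normalClosure_normal.conj_mem x hx g
      exact hsnHE.trans (sn_of_step hstepE)

end SNAux

/-- Let G be a finite group acting transitively on a finite set X,
x ∈ X, and H a normal subgroup of the stabilizer G_x. If for every y ∈ X the
subgroup H is subnormal in the subgroup of G generated by H ∪ H_y, then H is
subnormal in G. -/
theorem subnormal_of_pairwise_subnormal {G X : Type*} [Group G] [Finite G] [Finite X]
    [MulAction G X] [MulAction.IsPretransitive G X] (x : X) (H : Subgroup G)
    (hle : H ≤ MulAction.stabilizer G x)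
    (hnorm : ∀ k ∈ MulAction.stabilizer G x, ∀ h ∈ H, k * h * k⁻¹ ∈ H)
    (hyp : ∀ y : X, IsSubnormalIn H (Subgroup.closure ((H : Set G) ∪ conjAt H x y))) :
    IsSubnormalIn H ⊤ := by
  apply SNAux.chain_of_sn
  refine SNAux.crit (Nat.card G) H le_rfl ?_
  intro g
  have hset : conjAt H x (g • x) = (SNAux.cj g H : Set G) := by
    ext z
    constructor
    · intro hz
      simp only [conjAt, Set.mem_iUnion, Set.mem_image, SetLike.mem_coe,
        Set.mem_setOf_eq] at hz
      obtain ⟨g', hg', h, hh, rfl⟩ := hz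
      have hk : g⁻¹ * g' ∈ MulAction.stabilizer G x := by
        rw [MulAction.mem_stabilizer_iff, mul_smul, hg', ← hg']
        rw [hg']
        rw [inv_smul_eq_iff]
      have hkh : (g⁻¹ * g') * h * (g⁻¹ * g')⁻¹ ∈ H := hnorm _ hk h hh
      have := SNAux.cj_smul (g := g) hkh
      have e : g * ((g⁻¹ * g') * h * (g⁻¹ * g')⁻¹) * g⁻¹ = g' * h * g'⁻¹ := by group
      rwa [e] at this
    · intro hz
      rw [SetLike.mem_coe, SNAux.mem_cj] at hz
      simp only [conjAt, Set.mem_iUnion, Set.mem_image, SetLike.mem_coe, Set.mem_setOf_eq]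
      exact ⟨g, rfl, g⁻¹ * z * g, hz, by group⟩
  have hcl : Subgroup.closure ((H : Set G) ∪ conjAt H x (g • x)) = H ⊔ SNAux.cj g H := by
    rw [hset, Subgroup.closure_union, Subgroup.closure_eq, Subgroup.closure_eq]
  have := SNAux.sn_of_chain (hyp (g • x))
  rwa [hcl] at this
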